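/- Let (u₁,v₁) and (u₂,v₂) be ε-relatively close δ-squares, and let (s,t) be a δ′-square with O^λ_s = O^γ_t. Then (u₁s, v₁t) and (u₂s, v₂t) are (δ+δ′)-squares and are ε′-relatively close, where ε′ = e^{δ′}·λ_s^{−1}·(ε + 2·e^{ε+δ}·|e^{ε} − 1|). -/

import Mathlib

open Real Set

/-- Product of the contraction ratios (or orientations) along a finite word. -/
def wprod {n : ℕ} (f : Fin n → ℝ) (u : List (Fin n)) : ℝ := (u.map f).prod

/-- The infinite sequence obtained by appending the sequence `ω` to the word `u`. -/
def wcat {n : ℕ} (u : List (Fin n)) (ω : ℕ → Fin n) : ℕ → Fin n :=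
  fun k => if h : k < u.length then u.get ⟨k, h⟩ else ω (k - u.length)

/-- `(u,v)` is a `δ`-square: `λ_u/γ_v ∈ (e^{-δ}, e^{δ})`. -/
def IsSq {A B : ℕ} (lam : Fin A → ℝ) (gam : Fin B → ℝ) (δ : ℝ)
    (u : List (Fin A)) (v : List (Fin B)) : Prop :=
  wprod lam u / wprod gam v ∈ Set.Ioo (Real.exp (-δ)) (Real.exp δ)

/-- `(u₁,v₁)` and `(u₂,v₂)` are `ε`-relatively close (Definition 2.2), where
`L(ω,τ) = Π_λ(ω) + Π_γ(τ)` and `1̄` is realized as the constant sequence `0`. -/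
def RelClose {A B : ℕ} (lam Ol : Fin (A + 1) → ℝ) (gam Og : Fin (B + 1) → ℝ)
    (Pl : (ℕ → Fin (A + 1)) → ℝ) (Pg : (ℕ → Fin (B + 1)) → ℝ) (D ε : ℝ)
    (u1 : List (Fin (A + 1))) (v1 : List (Fin (B + 1)))
    (u2 : List (Fin (A + 1))) (v2 : List (Fin (B + 1))) : Prop :=
  wprod lam u1 / wprod lam u2 ∈ Set.Ioo (Real.exp (-ε)) (Real.exp ε) ∧
  wprod gam v1 / wprod gam v2 ∈ Set.Ioo (Real.exp (-ε)) (Real.exp ε) ∧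
  wprod Ol u1 = wprod Ol u2 ∧ wprod Og v1 = wprod Og v2 ∧
  |(Pl (wcat u1 fun _ => 0) + Pg (wcat v1 fun _ => 0)) -
      (Pl (wcat u2 fun _ => 0) + Pg (wcat v2 fun _ => 0))| <
    ε * D * min (min (wprod lam u1) (wprod lam u2)) (min (wprod gam v1) (wprod gam v2))

section aux
variable {n : ℕ}

lemma wprod_cons (f : Fin n → ℝ) (i : Fin n) (u : List (Fin n)) :
    wprod f (i :: u) = f i * wprod f u := by simp [wprod]

lemma wprod_append (f : Fin n → ℝ) (u s : List (Fin n)) :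
    wprod f (u ++ s) = wprod f u * wprod f s := by simp [wprod]

lemma wprod_pos {f : Fin n → ℝ} (hf : ∀ i, 0 < f i) (u : List (Fin n)) :
    0 < wprod f u := by
  induction u with
  | nil => norm_num [wprod]
  | cons i u ih => rw [wprod_cons]; exact mul_pos (hf i) ih

lemma wprod_le_one {f : Fin n → ℝ} (hf : ∀ i, f i ∈ Set.Ioo (0:ℝ) 1) (u : List (Fin n)) :
    wprod f u ≤ 1 := by
  induction u with
  | nil => norm_num [wprod]
  | cons i u ih =>
    rw [wprod_cons]
    nlinarith [(hf i).1, (hf i).2, wprod_pos (fun j => (hf j).1) u]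

lemma abs_wprod_sign {f : Fin n → ℝ} (hf : ∀ i, f i = 1 ∨ f i = -1) (u : List (Fin n)) :
    |wprod f u| = 1 := by
  induction u with
  | nil => norm_num [wprod]
  | cons i u ih => rw [wprod_cons, abs_mul, ih]; rcases hf i with h | h <;> simp [h]

lemma wcat_nil (ω : ℕ → Fin n) : wcat [] ω = ω := by
  funext k; simp [wcat]

lemma wcat_cons_zero (i : Fin n) (u : List (Fin n)) (ω : ℕ → Fin n) :
    wcat (i :: u) ω 0 = i := by simp [wcat]

lemma wcat_cons_succ (i : Fin n) (u : List (Fin n)) (ω : ℕ → Fin n) (k : ℕ) :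
    wcat (i :: u) ω (k + 1) = wcat u ω k := by
  rcases lt_or_ge k u.length with h | h
  · rw [wcat, wcat, dif_pos (by simpa using Nat.succ_lt_succ h), dif_pos h]
    simp
  · rw [wcat, wcat, dif_neg (by simp; omega), dif_neg (by omega)]
    congr 1
    simp [Nat.succ_sub_succ]

lemma wcat_append (u s : List (Fin n)) (ω : ℕ → Fin n) :
    wcat (u ++ s) ω = wcat u (wcat s ω) := by
  induction u with
  | nil => simp [wcat_nil]
  | cons i u ih =>
    funext k
    cases k with
    | zero => rw [List.cons_append, wcat_cons_zero, wcat_cons_zero]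
    | succ k => rw [List.cons_append, wcat_cons_succ, wcat_cons_succ, ih]

end aux

lemma P_wcat {n : ℕ} (lam O b : Fin (n+1) → ℝ) (P : (ℕ → Fin (n+1)) → ℝ)
    (hP : ∀ ω, P ω = O (ω 0) * lam (ω 0) * P (fun k => ω (k + 1)) + b (ω 0))
    (u : List (Fin (n+1))) :
    ∃ c, ∀ ω, P (wcat u ω) = wprod O u * wprod lam u * P ω + c := by
  induction u with
  | nil => exact ⟨0, fun ω => by simp [wcat_nil, wprod]⟩
  | cons i u ih =>
    obtain ⟨c, hc⟩ := ih
    refine ⟨O i * lam i * c + b i, fun ω => ?_⟩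
    rw [hP (wcat (i :: u) ω)]
    simp only [wcat_cons_zero]
    have hfun : (fun k => wcat (i :: u) ω (k + 1)) = wcat u ω :=
      funext fun k => wcat_cons_succ i u ω k
    rw [hfun, hc, wprod_cons, wprod_cons]
    ring

lemma P_wcat_append {n : ℕ} (lam O b : Fin (n+1) → ℝ) (P : (ℕ → Fin (n+1)) → ℝ)
    (hP : ∀ ω, P ω = O (ω 0) * lam (ω 0) * P (fun k => ω (k + 1)) + b (ω 0))
    (u s : List (Fin (n+1))) (ω : ℕ → Fin (n+1)) :
    P (wcat (u ++ s) ω) =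
      P (wcat u ω) + wprod O u * wprod lam u * (P (wcat s ω) - P ω) := by
  obtain ⟨c, hc⟩ := P_wcat lam O b P hP u
  rw [wcat_append, hc, hc]; ring

lemma sq_mul {a b c d x y : ℝ}
    (h1 : Real.exp (-x) < a / b) (h2 : a / b < Real.exp x)
    (h3 : Real.exp (-y) < c / d) (h4 : c / d < Real.exp y) :
    (a * c) / (b * d) ∈ Set.Ioo (Real.exp (-(x + y))) (Real.exp (x + y)) := by
  have hab : 0 < a / b := lt_trans (Real.exp_pos _) h1
  have hcd : 0 < c / d := lt_trans (Real.exp_pos _) h3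
  constructor
  · rw [neg_add, Real.exp_add, ← div_mul_div_comm]
    exact mul_lt_mul'' h1 h3 (Real.exp_pos _).le (Real.exp_pos _).le
  · rw [Real.exp_add, ← div_mul_div_comm]
    exact mul_lt_mul'' h2 h4 hab.le hcd.le

set_option maxHeartbeats 1600000 in
/-- Lemma 2.2: appending a `δ′`-square `(s,t)` with `O^λ_s = O^γ_t` to two
`ε`-relatively close `δ`-squares yields `(δ+δ′)`-squares that are
`e^{δ′} λ_s^{-1} (ε + 2 e^{ε+δ} |e^{ε}-1|)`-relatively close. -/
theorem stmt18 (A B : ℕ)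
    (lam Ol bl : Fin (A + 1) → ℝ) (gam Og bg : Fin (B + 1) → ℝ)
    (hlam : ∀ i, lam i ∈ Set.Ioo (0:ℝ) 1) (hgam : ∀ j, gam j ∈ Set.Ioo (0:ℝ) 1)
    (hOl : ∀ i, Ol i = 1 ∨ Ol i = -1) (hOg : ∀ j, Og j = 1 ∨ Og j = -1)
    (Pl : (ℕ → Fin (A + 1)) → ℝ) (Pg : (ℕ → Fin (B + 1)) → ℝ)
    (hPl : ∀ ω, Pl ω = Ol (ω 0) * lam (ω 0) * Pl (fun n => ω (n + 1)) + bl (ω 0))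
    (hPg : ∀ τ, Pg τ = Og (τ 0) * gam (τ 0) * Pg (fun n => τ (n + 1)) + bg (τ 0))
    (D : ℝ) (hD : 0 < D)
    (hrl : ∀ ω, Pl ω ∈ Set.Icc 0 D) (hrg : ∀ τ, Pg τ ∈ Set.Icc 0 D)
    (ε δ δ' : ℝ) (hε : 0 < ε) (hδ : 0 < δ) (hδ' : 0 < δ')
    (u1 u2 s : List (Fin (A + 1))) (v1 v2 t : List (Fin (B + 1)))
    (hsq1 : IsSq lam gam δ u1 v1) (hsq2 : IsSq lam gam δ u2 v2)
    (hrc : RelClose lam Ol gam Og Pl Pg D ε u1 v1 u2 v2)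
    (hst : IsSq lam gam δ' s t) (hOst : wprod Ol s = wprod Og t) :
    IsSq lam gam (δ + δ') (u1 ++ s) (v1 ++ t) ∧
    IsSq lam gam (δ + δ') (u2 ++ s) (v2 ++ t) ∧
    RelClose lam Ol gam Og Pl Pg D
      (Real.exp δ' * (wprod lam s)⁻¹ * (ε + 2 * Real.exp (ε + δ) * |Real.exp ε - 1|))
      (u1 ++ s) (v1 ++ t) (u2 ++ s) (v2 ++ t) := by
  obtain ⟨⟨hru1, hru2⟩, ⟨hrv1, hrv2⟩, hou, hov, hL⟩ := hrc
  obtain ⟨hsq1a, hsq1b⟩ := hsq1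
  obtain ⟨hsq2a, hsq2b⟩ := hsq2
  obtain ⟨hsta, hstb⟩ := hst
  have hl1 : 0 < wprod lam u1 := wprod_pos (fun i => (hlam i).1) _
  have hl2 : 0 < wprod lam u2 := wprod_pos (fun i => (hlam i).1) _
  have hls : 0 < wprod lam s := wprod_pos (fun i => (hlam i).1) _
  have hg1 : 0 < wprod gam v1 := wprod_pos (fun j => (hgam j).1) _
  have hg2 : 0 < wprod gam v2 := wprod_pos (fun j => (hgam j).1) _
  have hgt : 0 < wprod gam t := wprod_pos (fun j => (hgam j).1) _
  have hls1 : wprod lam s ≤ 1 := wprod_le_one hlam s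
  have hE1 : (1:ℝ) < Real.exp ε := by
    rw [← Real.exp_zero]; exact Real.exp_lt_exp.mpr hε
  have hF1 : (1:ℝ) < Real.exp δ := by
    rw [← Real.exp_zero]; exact Real.exp_lt_exp.mpr hδ
  have hG1 : (1:ℝ) ≤ Real.exp δ' := by
    rw [← Real.exp_zero]; exact Real.exp_le_exp.mpr hδ'.le
  have hY1 : (1:ℝ) ≤ Real.exp (ε + δ) := by
    rw [← Real.exp_zero]; exact Real.exp_le_exp.mpr (by linarith only [hε, hδ])
  have habs : |Real.exp ε - 1| = Real.exp ε - 1 := abs_of_pos (by linarith only [hE1])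
  have hεinv : Real.exp (-ε) * Real.exp ε = 1 := by
    rw [Real.exp_neg]; exact inv_mul_cancel₀ (Real.exp_pos _).ne'
  have hεδ : Real.exp (ε + δ) = Real.exp ε * Real.exp δ := Real.exp_add ε δ
  -- multiplicative forms of the ratio bounds
  have mu1 : Real.exp (-ε) * wprod lam u2 < wprod lam u1 := (lt_div_iff₀ hl2).1 hru1
  have mu2 : wprod lam u1 < Real.exp ε * wprod lam u2 := by
    have := (div_lt_iff₀ hl2).1 hru2; linarith only [this]
  have mv1 : Real.exp (-ε) * wprod gam v2 < wprod gam v1 := (lt_div_iff₀ hg2).1 hrv1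
  have mv2 : wprod gam v1 < Real.exp ε * wprod gam v2 := by
    have := (div_lt_iff₀ hg2).1 hrv2; linarith only [this]
  have ms2 : wprod lam u2 < Real.exp δ * wprod gam v2 := by
    have := (div_lt_iff₀ hg2).1 hsq2b; linarith only [this]
  have ms2' : Real.exp (-δ) * wprod gam v2 < wprod lam u2 := (lt_div_iff₀ hg2).1 hsq2a
  have mst : wprod lam s < Real.exp δ' * wprod gam t := by
    have := (div_lt_iff₀ hgt).1 hstb; linarith only [this]
  -- derived comparisons
  have hu21 : wprod lam u2 < Real.exp ε * wprod lam u1 := by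
    have h := mul_lt_mul_of_pos_left mu1 (Real.exp_pos ε)
    rw [← mul_assoc, mul_comm (Real.exp ε) (Real.exp (-ε)), hεinv, one_mul] at h
    exact h
  have hv21 : wprod gam v2 < Real.exp ε * wprod gam v1 := by
    have h := mul_lt_mul_of_pos_left mv1 (Real.exp_pos ε)
    rw [← mul_assoc, mul_comm (Real.exp ε) (Real.exp (-ε)), hεinv, one_mul] at h
    exact h
  have hg2l2 : wprod gam v2 < Real.exp δ * wprod lam u2 := by
    have h := mul_lt_mul_of_pos_left ms2' (Real.exp_pos δ)
    rw [← mul_assoc, ← Real.exp_add] at h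
    simpa using h
  set l1 := wprod lam u1
  set l2 := wprod lam u2
  set ls := wprod lam s
  set g1 := wprod gam v1
  set g2 := wprod gam v2
  set gt := wprod gam t
  set m := min (min l1 l2) (min g1 g2) with hm_def
  have hm0 : 0 < m := lt_min (lt_min hl1 hl2) (lt_min hg1 hg2)
  have hml1 : m ≤ l1 := le_trans (min_le_left _ _) (min_le_left _ _)
  have hml2 : m ≤ l2 := le_trans (min_le_left _ _) (min_le_right _ _)
  have hmg1 : m ≤ g1 := le_trans (min_le_right _ _) (min_le_left _ _)
  have hmg2 : m ≤ g2 := le_trans (min_le_right _ _) (min_le_right _ _)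
  -- key bounds : l2, g2 ≤ e^{ε+δ} m
  have hmin_split : Real.exp (ε + δ) * m =
      min (min (Real.exp (ε + δ) * l1) (Real.exp (ε + δ) * l2))
        (min (Real.exp (ε + δ) * g1) (Real.exp (ε + δ) * g2)) := by
    rw [hm_def, mul_min_of_nonneg _ _ (Real.exp_pos _).le,
      mul_min_of_nonneg _ _ (Real.exp_pos _).le, mul_min_of_nonneg _ _ (Real.exp_pos _).le]
  have keyA : l2 ≤ Real.exp (ε + δ) * m := by
    rw [hmin_split]
    refine le_min (le_min ?_ ?_) (le_min ?_ ?_) <;> rw [hεδ]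
    · have h2 : Real.exp ε * l1 ≤ Real.exp δ * (Real.exp ε * l1) :=
        le_mul_of_one_le_left (by positivity) hF1.le
      linarith only [hu21, h2]
    · have h2 : l2 ≤ Real.exp ε * Real.exp δ * l2 :=
        le_mul_of_one_le_left hl2.le (by nlinarith only [hE1, hF1])
      linarith only [h2]
    · have h2 : Real.exp δ * g2 < Real.exp δ * (Real.exp ε * g1) :=
        mul_lt_mul_of_pos_left hv21 (Real.exp_pos δ)
      linarith only [ms2, h2]
    · have h2 : Real.exp δ * g2 ≤ Real.exp ε * (Real.exp δ * g2) :=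
        le_mul_of_one_le_left (by positivity) hE1.le
      linarith only [ms2, h2]
  have keyB : g2 ≤ Real.exp (ε + δ) * m := by
    rw [hmin_split]
    refine le_min (le_min ?_ ?_) (le_min ?_ ?_) <;> rw [hεδ]
    · have h2 : Real.exp δ * l2 < Real.exp δ * (Real.exp ε * l1) :=
        mul_lt_mul_of_pos_left hu21 (Real.exp_pos δ)
      linarith only [hg2l2, h2]
    · have h2 : Real.exp δ * l2 ≤ Real.exp ε * (Real.exp δ * l2) :=
        le_mul_of_one_le_left (by positivity) hE1.le
      linarith only [hg2l2, h2]
    · have h2 : Real.exp ε * g1 ≤ Real.exp δ * (Real.exp ε * g1) :=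
        le_mul_of_one_le_left (by positivity) hF1.le
      linarith only [hv21, h2]
    · have h2 : g2 ≤ Real.exp ε * Real.exp δ * g2 :=
        le_mul_of_one_le_left hg2.le (by nlinarith only [hE1, hF1])
      linarith only [h2]
  -- difference bounds
  have hsum2 : (2:ℝ) ≤ Real.exp ε + Real.exp (-ε) := by
    linarith only [Real.add_one_le_exp ε, Real.add_one_le_exp (-ε)]
  have hΔl : |l1 - l2| ≤ (Real.exp ε - 1) * l2 := by
    rw [abs_le]
    constructor
    · have h := mul_nonneg (by linarith only [hsum2] :
        (0:ℝ) ≤ Real.exp ε + Real.exp (-ε) - 2) hl2.le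
      linarith only [mu1, h]
    · linarith only [mu2]
  have hΔg : |g1 - g2| ≤ (Real.exp ε - 1) * g2 := by
    rw [abs_le]
    constructor
    · have h := mul_nonneg (by linarith only [hsum2] :
        (0:ℝ) ≤ Real.exp ε + Real.exp (-ε) - 2) hg2.le
      linarith only [mv1, h]
    · linarith only [mv2]
  -- the appended minimum m'
  set m' := min (min (l1 * ls) (l2 * ls)) (min (g1 * gt) (g2 * gt)) with hm'_def
  have hlsm : ls * m ≤ Real.exp δ' * m' := by
    rw [hm'_def, mul_min_of_nonneg _ _ (Real.exp_pos δ').le,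
      mul_min_of_nonneg _ _ (Real.exp_pos δ').le, mul_min_of_nonneg _ _ (Real.exp_pos δ').le]
    refine le_min (le_min ?_ ?_) (le_min ?_ ?_)
    · have h1 : ls * m ≤ ls * l1 := mul_le_mul_of_nonneg_left hml1 hls.le
      have h2 : l1 * ls ≤ Real.exp δ' * (l1 * ls) :=
        le_mul_of_one_le_left (by positivity) hG1
      linarith only [h1, h2]
    · have h1 : ls * m ≤ ls * l2 := mul_le_mul_of_nonneg_left hml2 hls.le
      have h2 : l2 * ls ≤ Real.exp δ' * (l2 * ls) :=
        le_mul_of_one_le_left (by positivity) hG1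
      linarith only [h1, h2]
    · have h1 : ls * m ≤ ls * g1 := mul_le_mul_of_nonneg_left hmg1 hls.le
      have h2 : ls * g1 < (Real.exp δ' * gt) * g1 := mul_lt_mul_of_pos_right mst hg1
      linarith only [h1, h2]
    · have h1 : ls * m ≤ ls * g2 := mul_le_mul_of_nonneg_left hmg2 hls.le
      have h2 : ls * g2 < (Real.exp δ' * gt) * g2 := mul_lt_mul_of_pos_right mst hg2
      linarith only [h1, h2]
  -- identities for the coding maps
  set z : ℕ → Fin (A + 1) := fun _ => 0 with hz
  set w : ℕ → Fin (B + 1) := fun _ => 0 with hw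
  set a := Pl (wcat s z) - Pl z with ha_def
  set b := Pg (wcat t w) - Pg w with hb_def
  have ha : |a| ≤ D := by
    rw [ha_def, abs_le]
    constructor <;>
      linarith only [(hrl (wcat s z)).1, (hrl (wcat s z)).2, (hrl z).1, (hrl z).2]
  have hb : |b| ≤ D := by
    rw [hb_def, abs_le]
    constructor <;>
      linarith only [(hrg (wcat t w)).1, (hrg (wcat t w)).2, (hrg w).1, (hrg w).2]
  have kl1 := P_wcat_append lam Ol bl Pl hPl u1 s z
  have kl2 := P_wcat_append lam Ol bl Pl hPl u2 s z
  have kg1 := P_wcat_append gam Og bg Pg hPg v1 t w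
  have kg2 := P_wcat_append gam Og bg Pg hPg v2 t w
  set ε' := Real.exp δ' * (wprod lam s)⁻¹ * (ε + 2 * Real.exp (ε + δ) * |Real.exp ε - 1|)
    with hε'_def
  have hls_inv1 : (1:ℝ) ≤ ls⁻¹ := (one_le_inv₀ hls).2 hls1
  have hP0 : 0 < ε + 2 * Real.exp (ε + δ) * (Real.exp ε - 1) := by
    have h := mul_pos (Real.exp_pos (ε + δ)) (by linarith only [hE1] : (0:ℝ) < Real.exp ε - 1)
    linarith only [h, hε]
  have hεε' : ε ≤ ε' := by
    rw [hε'_def, habs]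
    have hGi : (1:ℝ) ≤ Real.exp δ' * ls⁻¹ := by
      have := mul_le_mul hG1 hls_inv1 zero_le_one (by linarith only [hG1])
      linarith only [this]
    have h2 := le_mul_of_one_le_left hP0.le hGi
    have h := mul_pos (Real.exp_pos (ε + δ)) (by linarith only [hE1] : (0:ℝ) < Real.exp ε - 1)
    linarith only [h2, h]
  refine ⟨?_, ?_, ?_, ?_, ?_, ?_, ?_⟩
  · unfold IsSq
    rw [wprod_append, wprod_append]
    exact sq_mul hsq1a hsq1b hsta hstb
  · unfold IsSq
    rw [wprod_append, wprod_append]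
    exact sq_mul hsq2a hsq2b hsta hstb
  · rw [wprod_append, wprod_append, mul_div_mul_right _ _ (ne_of_gt hls)]
    exact ⟨lt_of_le_of_lt (Real.exp_le_exp.mpr (by linarith only [hεε'])) hru1,
      lt_of_lt_of_le hru2 (Real.exp_le_exp.mpr hεε')⟩
  · rw [wprod_append, wprod_append, mul_div_mul_right _ _ (ne_of_gt hgt)]
    exact ⟨lt_of_le_of_lt (Real.exp_le_exp.mpr (by linarith only [hεε'])) hrv1,
      lt_of_lt_of_le hrv2 (Real.exp_le_exp.mpr hεε')⟩
  · rw [wprod_append, wprod_append, hou]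
  · rw [wprod_append, wprod_append, hov]
  · -- the main estimate
    simp only [wprod_append]
    have hdiff :
        (Pl (wcat (u1 ++ s) z) + Pg (wcat (v1 ++ t) w)) -
          (Pl (wcat (u2 ++ s) z) + Pg (wcat (v2 ++ t) w)) =
        ((Pl (wcat u1 z) + Pg (wcat v1 w)) - (Pl (wcat u2 z) + Pg (wcat v2 w))) +
          wprod Ol u1 * ((l1 - l2) * a) + wprod Og v1 * ((g1 - g2) * b) := by
      rw [kl1, kl2, kg1, kg2, ← hou, ← hov]; ring
    have habs1 :
        |(Pl (wcat (u1 ++ s) z) + Pg (wcat (v1 ++ t) w)) -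
          (Pl (wcat (u2 ++ s) z) + Pg (wcat (v2 ++ t) w))| ≤
        |(Pl (wcat u1 z) + Pg (wcat v1 w)) - (Pl (wcat u2 z) + Pg (wcat v2 w))| +
          |l1 - l2| * |a| + |g1 - g2| * |b| := by
      rw [hdiff]
      calc |_ + wprod Ol u1 * ((l1 - l2) * a) + wprod Og v1 * ((g1 - g2) * b)|
          ≤ |_ + wprod Ol u1 * ((l1 - l2) * a)| + |wprod Og v1 * ((g1 - g2) * b)| :=
            abs_add_le _ _
        _ ≤ |(Pl (wcat u1 z) + Pg (wcat v1 w)) - (Pl (wcat u2 z) + Pg (wcat v2 w))| +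
              |wprod Ol u1 * ((l1 - l2) * a)| + |wprod Og v1 * ((g1 - g2) * b)| := by
            gcongr; exact abs_add_le _ _
        _ = _ := by
            have e1 : |wprod Ol u1 * ((l1 - l2) * a)| = |l1 - l2| * |a| := by
              rw [abs_mul, abs_wprod_sign hOl, one_mul, abs_mul]
            have e2 : |wprod Og v1 * ((g1 - g2) * b)| = |g1 - g2| * |b| := by
              rw [abs_mul, abs_wprod_sign hOg, one_mul, abs_mul]
            rw [e1, e2]
    have hE1' : (0:ℝ) ≤ Real.exp ε - 1 := by linarith only [hE1]
    have hstep : |(Pl (wcat u1 z) + Pg (wcat v1 w)) - (Pl (wcat u2 z) + Pg (wcat v2 w))| +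
          |l1 - l2| * |a| + |g1 - g2| * |b| <
        (ε + 2 * Real.exp (ε + δ) * (Real.exp ε - 1)) * (D * m) := by
      have b1 : |l1 - l2| * |a| ≤ (Real.exp ε - 1) * l2 * D :=
        mul_le_mul hΔl ha (abs_nonneg _) (mul_nonneg hE1' hl2.le)
      have b2 : |g1 - g2| * |b| ≤ (Real.exp ε - 1) * g2 * D :=
        mul_le_mul hΔg hb (abs_nonneg _) (mul_nonneg hE1' hg2.le)
      have b3 : (Real.exp ε - 1) * l2 * D ≤ (Real.exp ε - 1) * (Real.exp (ε + δ) * m) * D :=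
        mul_le_mul_of_nonneg_right (mul_le_mul_of_nonneg_left keyA hE1') hD.le
      have b4 : (Real.exp ε - 1) * g2 * D ≤ (Real.exp ε - 1) * (Real.exp (ε + δ) * m) * D :=
        mul_le_mul_of_nonneg_right (mul_le_mul_of_nonneg_left keyB hE1') hD.le
      have hL' : |(Pl (wcat u1 z) + Pg (wcat v1 w)) - (Pl (wcat u2 z) + Pg (wcat v2 w))| <
          ε * D * m := hL
      linarith only [hL', b1, b2, b3, b4]
    have hfin : (ε + 2 * Real.exp (ε + δ) * (Real.exp ε - 1)) * (D * m) ≤ ε' * D * m' := by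
      have h2 : m ≤ Real.exp δ' * ls⁻¹ * m' := by
        have h3 := mul_le_mul_of_nonneg_left hlsm (le_of_lt (inv_pos.mpr hls))
        calc m = ls⁻¹ * (ls * m) := by
              rw [← mul_assoc, inv_mul_cancel₀ (ne_of_gt hls), one_mul]
          _ ≤ ls⁻¹ * (Real.exp δ' * m') := h3
          _ = Real.exp δ' * ls⁻¹ * m' := by ring
      calc (ε + 2 * Real.exp (ε + δ) * (Real.exp ε - 1)) * (D * m)
          ≤ (ε + 2 * Real.exp (ε + δ) * (Real.exp ε - 1)) *
              (D * (Real.exp δ' * ls⁻¹ * m')) := by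
            exact mul_le_mul_of_nonneg_left (mul_le_mul_of_nonneg_left h2 hD.le) hP0.le
        _ = ε' * D * m' := by rw [hε'_def, habs]; ring
    calc |(Pl (wcat (u1 ++ s) z) + Pg (wcat (v1 ++ t) w)) -
          (Pl (wcat (u2 ++ s) z) + Pg (wcat (v2 ++ t) w))|
        ≤ _ := habs1
      _ < (ε + 2 * Real.exp (ε + δ) * (Real.exp ε - 1)) * (D * m) := hstep
      _ ≤ ε' * D * m' := hfin
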